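/- Let V be a finite-dimensional complex vector space, U ⊆ ℂ an open set and r a non-negative integer. Consider the space of V-configurations of rank r over U, i.e. pairs (A, ι) with A ∈ M_r(ℂ) and ι : V → ℂ^r linear such that every eigenvalue of A lies in U and the linear map V^{⊕r} → ℂ^r, (v_0, …, v_{r−1}) ↦ ∑_{i=0}^{r−1} A^i ι(v_i), is surjective, topologized as a subspace of M_r(ℂ) × Hom_ℂ(V, ℂ^r). Then the left action of GL_r(ℂ) given by g·(A, ι) = (g A g^{−1}, g ∘ ι) is free and proper (the map GL_r(ℂ) × X → X × X, (g, x) ↦ (g·x, x), is a proper map). -/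

import Mathlib

open Matrix

/-- The space of `V`-configurations of rank `r` over `U ⊆ ℂ`: pairs `(A, ι)` of a
matrix `A ∈ M_r(ℂ)` and a (continuous) linear map `ι : V → ℂ^r` such that every
eigenvalue of `A` lies in `U` and `(v_0, …, v_{r−1}) ↦ ∑_i A^i ι(v_i)` is surjective,
topologized as a subspace of `M_r(ℂ) × Hom_ℂ(V, ℂ^r)`. -/
def Config (V : Type) [NormedAddCommGroup V] [NormedSpace ℂ V] (U : Set ℂ) (r : ℕ) :
    Set (Matrix (Fin r) (Fin r) ℂ × (V →L[ℂ] (Fin r → ℂ))) :=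
  {p | spectrum ℂ p.1 ⊆ U ∧
    Function.Surjective fun w : Fin r → V =>
      ∑ i : Fin r, (p.1 ^ (i : ℕ)).mulVec (p.2 (w i))}

/-- The left action of `GL_r(ℂ)`: `g · (A, ι) = (g A g⁻¹, g ∘ ι)`. -/
noncomputable def confAct {V : Type} [NormedAddCommGroup V] [NormedSpace ℂ V] {r : ℕ}
    (g : GL (Fin r) ℂ) (p : Matrix (Fin r) (Fin r) ℂ × (V →L[ℂ] (Fin r → ℂ))) :
    Matrix (Fin r) (Fin r) ℂ × (V →L[ℂ] (Fin r → ℂ)) :=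
  ((g : Matrix (Fin r) (Fin r) ℂ) * p.1 * ((g⁻¹ : GL (Fin r) ℂ) : Matrix (Fin r) (Fin r) ℂ),
    (LinearMap.toContinuousLinearMap
      ((g : Matrix (Fin r) (Fin r) ℂ).mulVecLin)).comp p.2)

namespace ConfigAux

variable {V : Type} [NormedAddCommGroup V] [NormedSpace ℂ V] {r : ℕ}

/-- A matrix, as a continuous linear map on `ℂ^r`, bundled as a linear map of the matrix. -/
noncomputable def mclm (r : ℕ) : Matrix (Fin r) (Fin r) ℂ →ₗ[ℂ]
    ((Fin r → ℂ) →L[ℂ] (Fin r → ℂ)) :=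
  (LinearMap.toContinuousLinearMap :
      ((Fin r → ℂ) →ₗ[ℂ] (Fin r → ℂ)) ≃ₗ[ℂ] ((Fin r → ℂ) →L[ℂ] (Fin r → ℂ))).toLinearMap
    ∘ₗ (Matrix.toLin' : Matrix (Fin r) (Fin r) ℂ ≃ₗ[ℂ] _).toLinearMap

@[simp] lemma mclm_apply (A : Matrix (Fin r) (Fin r) ℂ) (v : Fin r → ℂ) :
    mclm r A v = A.mulVec v := rfl

lemma mclm_mul (A B : Matrix (Fin r) (Fin r) ℂ) :
    mclm r (A * B) = mclm r A * mclm r B := by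
  ext v
  simp [Matrix.mulVec_mulVec, ContinuousLinearMap.mul_apply]

lemma mclm_one : mclm r (1 : Matrix (Fin r) (Fin r) ℂ) = 1 := by
  ext v
  simp [ContinuousLinearMap.one_apply]

lemma mclm_surjective (g : GL (Fin r) ℂ) :
    Function.Surjective ⇑(mclm r (g : Matrix (Fin r) (Fin r) ℂ)) := by
  intro v
  refine ⟨((g⁻¹ : GL (Fin r) ℂ) : Matrix (Fin r) (Fin r) ℂ).mulVec v, ?_⟩
  rw [mclm_apply, Matrix.mulVec_mulVec, Units.mul_inv, Matrix.one_mulVec]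

lemma mclm_continuous : Continuous (mclm r) :=
  (mclm r).continuous_of_finiteDimensional

/-- The combined linear map attached to a configuration candidate. -/
noncomputable def Phi (p : Matrix (Fin r) (Fin r) ℂ × (V →L[ℂ] (Fin r → ℂ))) :
    (Fin r → V) →L[ℂ] (Fin r → ℂ) :=
  ∑ i : Fin r, (mclm r (p.1 ^ (i : ℕ))).comp (p.2.comp (ContinuousLinearMap.proj i))

lemma Phi_apply (p : Matrix (Fin r) (Fin r) ℂ × (V →L[ℂ] (Fin r → ℂ))) (w : Fin r → V) :
    Phi p w = ∑ i : Fin r, (p.1 ^ (i : ℕ)).mulVec (p.2 (w i)) := by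
  simp [Phi, ContinuousLinearMap.sum_apply]

lemma Phi_continuous :
    Continuous fun p : Matrix (Fin r) (Fin r) ℂ × (V →L[ℂ] (Fin r → ℂ)) => Phi p := by
  refine continuous_finset_sum _ fun i _ => ?_
  exact (mclm_continuous.comp ((continuous_fst).pow _)).clm_comp
    (continuous_snd.clm_comp continuous_const)

lemma Phi_act (g : GL (Fin r) ℂ) (p : Matrix (Fin r) (Fin r) ℂ × (V →L[ℂ] (Fin r → ℂ))) :
    Phi (confAct g p) = (mclm r (g : Matrix (Fin r) (Fin r) ℂ)).comp (Phi p) := by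
  refine ContinuousLinearMap.ext fun w => ?_
  have hms := map_sum (mclm r (g : Matrix (Fin r) (Fin r) ℂ))
    (fun i : Fin r => (p.1 ^ (i : ℕ)).mulVec (p.2 (w i))) Finset.univ
  rw [ContinuousLinearMap.comp_apply, Phi_apply, Phi_apply, hms]
  have hterm : ∀ i : Fin r,
      ((confAct g p).1 ^ (i : ℕ)).mulVec ((confAct g p).2 (w i))
      = mclm r (g : Matrix (Fin r) (Fin r) ℂ) ((p.1 ^ (i : ℕ)).mulVec (p.2 (w i))) := by
    intro i
    have h2 : (confAct g p).2 (w i)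
        = (g : Matrix (Fin r) (Fin r) ℂ).mulVec (p.2 (w i)) := rfl
    have h1 : (confAct g p).1 = (g : Matrix (Fin r) (Fin r) ℂ) * p.1 *
        ((g⁻¹ : GL (Fin r) ℂ) : Matrix (Fin r) (Fin r) ℂ) := rfl
    rw [h2, h1, Units.conj_pow, mclm_apply, Matrix.mulVec_mulVec, Matrix.mulVec_mulVec,
      mul_assoc, Units.inv_mul, mul_one]
  exact Finset.sum_congr rfl fun i _ => hterm i

lemma mem_config_surj {U : Set ℂ} {p : Matrix (Fin r) (Fin r) ℂ × (V →L[ℂ] (Fin r → ℂ))}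
    (hp : p ∈ Config V U r) : Function.Surjective ⇑(Phi p) := by
  intro y
  obtain ⟨w, hw⟩ := hp.2 y
  exact ⟨w, by rw [Phi_apply]; exact hw⟩

lemma conf_mem {U : Set ℂ} (g : GL (Fin r) ℂ)
    {p : Matrix (Fin r) (Fin r) ℂ × (V →L[ℂ] (Fin r → ℂ))} (hp : p ∈ Config V U r) :
    confAct g p ∈ Config V U r := by
  refine ⟨?_, ?_⟩
  · show spectrum ℂ ((g : Matrix (Fin r) (Fin r) ℂ) * p.1 *
      ((g⁻¹ : GL (Fin r) ℂ) : Matrix (Fin r) (Fin r) ℂ)) ⊆ U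
    rw [spectrum.units_conjugate]
    exact hp.1
  · have hs : Function.Surjective ⇑(Phi (confAct g p)) := by
      rw [Phi_act]
      rw [ContinuousLinearMap.coe_comp']
      exact (mclm_surjective g).comp (mem_config_surj hp)
    intro y
    obtain ⟨w, hw⟩ := hs y
    rw [Phi_apply] at hw
    exact ⟨w, hw⟩

end ConfigAux

open ConfigAux Filter Function Topology in
/-- The `GL_r(ℂ)`-action on the space of `V`-configurations of rank
`r` over an open set `U ⊆ ℂ` is well defined, free, and proper (the map
`GL_r(ℂ) × X → X × X`, `(g, x) ↦ (g·x, x)` is a proper map). -/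
theorem configuration_action_free_and_proper
    (V : Type) [NormedAddCommGroup V] [NormedSpace ℂ V] [FiniteDimensional ℂ V]
    (U : Set ℂ) (hU : IsOpen U) (r : ℕ) :
    ∃ hmem : ∀ (g : GL (Fin r) ℂ) (p : Config V U r),
        confAct g (p : Matrix (Fin r) (Fin r) ℂ × (V →L[ℂ] (Fin r → ℂ))) ∈ Config V U r,
      (∀ (g : GL (Fin r) ℂ) (p : Config V U r),
          confAct g (p : Matrix (Fin r) (Fin r) ℂ × (V →L[ℂ] (Fin r → ℂ))) = (p : _) →
          g = 1) ∧
      IsProperMap (fun q : GL (Fin r) ℂ × Config V U r =>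
        ((⟨confAct q.1 (q.2 : _), hmem q.1 q.2⟩ : Config V U r), q.2)) := by
  refine ⟨fun g p => conf_mem g p.2, ?_, ?_⟩
  · -- freeness
    intro g p hfix
    have hsurj := mem_config_surj p.2
    have key : ∀ v : Fin r → ℂ, (g : Matrix (Fin r) (Fin r) ℂ).mulVec v = v := by
      intro v
      obtain ⟨w, hw⟩ := hsurj v
      have h1 : Phi (confAct g (p : _)) w = Phi (p : _) w := by rw [hfix]
      rw [Phi_act, ContinuousLinearMap.comp_apply, hw, mclm_apply] at h1
      exact h1
    have hm : (g : Matrix (Fin r) (Fin r) ℂ) = 1 := by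
      apply Matrix.toLin'.injective
      refine LinearMap.ext fun v => ?_
      rw [Matrix.toLin'_apply, Matrix.toLin'_apply, key v, Matrix.one_mulVec]
    exact Units.ext hm
  · -- properness
    have hconf_cont : Continuous fun z : GL (Fin r) ℂ × Config V U r =>
        confAct z.1 (z.2 : Matrix (Fin r) (Fin r) ℂ × (V →L[ℂ] (Fin r → ℂ))) := by
      have h1 : Continuous fun z : GL (Fin r) ℂ × Config V U r =>
          (z.1 : Matrix (Fin r) (Fin r) ℂ) := Units.continuous_val.comp continuous_fst
      have h1' : Continuous fun z : GL (Fin r) ℂ × Config V U r =>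
          ((z.1⁻¹ : GL (Fin r) ℂ) : Matrix (Fin r) (Fin r) ℂ) :=
        Units.continuous_coe_inv.comp continuous_fst
      have h2 : Continuous fun z : GL (Fin r) ℂ × Config V U r =>
          (z.2 : Matrix (Fin r) (Fin r) ℂ × (V →L[ℂ] (Fin r → ℂ))) :=
        continuous_subtype_val.comp continuous_snd
      refine Continuous.prodMk ?_ ?_
      · exact (h1.mul (continuous_fst.comp h2)).mul h1'
      · exact (mclm_continuous.comp h1).clm_comp (continuous_snd.comp h2)
    rw [isProperMap_iff_ultrafilter]
    constructor
    · exact (hconf_cont.subtype_mk _).prodMk continuous_snd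
    · intro 𝒰 y hy
      set pv := (y.2 : Matrix (Fin r) (Fin r) ℂ × (V →L[ℂ] (Fin r → ℂ))) with hpv_def
      set qv := (y.1 : Matrix (Fin r) (Fin r) ℂ × (V →L[ℂ] (Fin r → ℂ))) with hqv_def
      have hp2 : Tendsto (fun z : GL (Fin r) ℂ × Config V U r => z.2) ↑𝒰 (𝓝 y.2) :=
        (continuous_snd.tendsto y).comp hy
      have hpvt : Tendsto (fun z : GL (Fin r) ℂ × Config V U r =>
          (z.2 : Matrix (Fin r) (Fin r) ℂ × (V →L[ℂ] (Fin r → ℂ)))) ↑𝒰 (𝓝 pv) :=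
        (continuous_subtype_val.tendsto y.2).comp hp2
      have hact : Tendsto (fun z : GL (Fin r) ℂ × Config V U r =>
          confAct z.1 (z.2 : _)) ↑𝒰 (𝓝 qv) :=
        (continuous_subtype_val.tendsto y.1).comp ((continuous_fst.tendsto y).comp hy)
      -- sections of Phi pv and Phi qv
      obtain ⟨W₀, hW₀⟩ := LinearMap.exists_rightInverse_of_surjective
        ((Phi pv : (Fin r → V) →L[ℂ] (Fin r → ℂ)) : (Fin r → V) →ₗ[ℂ] (Fin r → ℂ))
        (LinearMap.range_eq_top.mpr (mem_config_surj y.2.2))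
      obtain ⟨W₁, hW₁⟩ := LinearMap.exists_rightInverse_of_surjective
        ((Phi qv : (Fin r → V) →L[ℂ] (Fin r → ℂ)) : (Fin r → V) →ₗ[ℂ] (Fin r → ℂ))
        (LinearMap.range_eq_top.mpr (mem_config_surj y.1.2))
      set W : (Fin r → ℂ) →L[ℂ] (Fin r → V) := LinearMap.toContinuousLinearMap W₀ with hW_def
      set W' : (Fin r → ℂ) →L[ℂ] (Fin r → V) := LinearMap.toContinuousLinearMap W₁ with hW'_def
      set Cp : Matrix (Fin r) (Fin r) ℂ × (V →L[ℂ] (Fin r → ℂ)) →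
          ((Fin r → ℂ) →L[ℂ] (Fin r → ℂ)) := fun p' => (Phi p').comp W with hCp_def
      set Cq : Matrix (Fin r) (Fin r) ℂ × (V →L[ℂ] (Fin r → ℂ)) →
          ((Fin r → ℂ) →L[ℂ] (Fin r → ℂ)) := fun p' => (Phi p').comp W' with hCq_def
      have hCp_cont : Continuous Cp := Phi_continuous.clm_comp continuous_const
      have hCq_cont : Continuous Cq := Phi_continuous.clm_comp continuous_const
      have hCp1 : Cp pv = 1 :=
        ContinuousLinearMap.ext fun v => by simpa [Cp, W] using LinearMap.congr_fun hW₀ v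
      have hCq1 : Cq qv = 1 :=
        ContinuousLinearMap.ext fun v => by simpa [Cq, W'] using LinearMap.congr_fun hW₁ v
      -- key algebraic identities
      have hkeyp : ∀ (g : GL (Fin r) ℂ) p',
          mclm r (g : Matrix (Fin r) (Fin r) ℂ) * Cp p' = Cp (confAct g p') := by
        intro g p'
        show (mclm r _).comp ((Phi p').comp W) = (Phi (confAct g p')).comp W
        rw [Phi_act, ContinuousLinearMap.comp_assoc]
      have hkeyq : ∀ (g : GL (Fin r) ℂ) p',
          mclm r (g : Matrix (Fin r) (Fin r) ℂ) * Cq p' = Cq (confAct g p') := by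
        intro g p'
        show (mclm r _).comp ((Phi p').comp W') = (Phi (confAct g p')).comp W'
        rw [Phi_act, ContinuousLinearMap.comp_assoc]
      -- limits
      have hCpt : Tendsto (fun z : GL (Fin r) ℂ × Config V U r => Cp (z.2 : _)) ↑𝒰 (𝓝 1) := by
        have := (hCp_cont.tendsto pv).comp hpvt
        rwa [hCp1] at this
      have hCqt : Tendsto (fun z : GL (Fin r) ℂ × Config V U r =>
          Cq (confAct z.1 (z.2 : _))) ↑𝒰 (𝓝 1) := by
        have := (hCq_cont.tendsto qv).comp hact
        rwa [hCq1] at this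
      have hUnit_nhds : {x : (Fin r → ℂ) →L[ℂ] (Fin r → ℂ) | IsUnit x} ∈
          𝓝 (1 : (Fin r → ℂ) →L[ℂ] (Fin r → ℂ)) :=
        Units.isOpen.mem_nhds isUnit_one
      have hunit_p : ∀ᶠ z : GL (Fin r) ℂ × Config V U r in ↑𝒰, IsUnit (Cp (z.2 : _)) :=
        hCpt.eventually hUnit_nhds
      have hunit_q : ∀ᶠ z : GL (Fin r) ℂ × Config V U r in ↑𝒰,
          IsUnit (Cq (confAct z.1 (z.2 : _))) := hCqt.eventually hUnit_nhds
      have hinvp : Tendsto (fun z : GL (Fin r) ℂ × Config V U r =>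
          Ring.inverse (Cp (z.2 : _))) ↑𝒰 (𝓝 1) := by
        have h1 := (NormedRing.inverse_continuousAt
          (1 : ((Fin r → ℂ) →L[ℂ] (Fin r → ℂ))ˣ)).tendsto.comp
          (by simpa using hCpt)
        simpa [Ring.inverse_one, Function.comp_def] using h1
      have hinvq : Tendsto (fun z : GL (Fin r) ℂ × Config V U r =>
          Ring.inverse (Cq (confAct z.1 (z.2 : _)))) ↑𝒰 (𝓝 1) := by
        have h1 := (NormedRing.inverse_continuousAt
          (1 : ((Fin r → ℂ) →L[ℂ] (Fin r → ℂ))ˣ)).tendsto.comp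
          (by simpa using hCqt)
        simpa [Ring.inverse_one, Function.comp_def] using h1
      -- limit of the matrices
      have hMn : (fun z : GL (Fin r) ℂ × Config V U r =>
          mclm r (z.1 : Matrix (Fin r) (Fin r) ℂ)) =ᶠ[↑𝒰]
          fun z => Cp (confAct z.1 (z.2 : _)) * Ring.inverse (Cp (z.2 : _)) := by
        filter_upwards [hunit_p] with z hz
        rw [← hkeyp z.1 (z.2 : _), Ring.mul_inverse_cancel_right _ _ hz]
      have hCact : Tendsto (fun z : GL (Fin r) ℂ × Config V U r =>
          Cp (confAct z.1 (z.2 : _))) ↑𝒰 (𝓝 (Cp qv)) := (hCp_cont.tendsto qv).comp hact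
      have hMt : Tendsto (fun z : GL (Fin r) ℂ × Config V U r =>
          mclm r (z.1 : Matrix (Fin r) (Fin r) ℂ)) ↑𝒰 (𝓝 (Cp qv)) := by
        have := hCact.mul hinvp
        rw [mul_one] at this
        exact Tendsto.congr' hMn.symm this
      -- limit of the inverse matrices
      have hMn' : (fun z : GL (Fin r) ℂ × Config V U r =>
          mclm r ((z.1⁻¹ : GL (Fin r) ℂ) : Matrix (Fin r) (Fin r) ℂ)) =ᶠ[↑𝒰]
          fun z => Cq (z.2 : _) * Ring.inverse (Cq (confAct z.1 (z.2 : _))) := by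
        filter_upwards [hunit_q] with z hz
        have hident : mclm r ((z.1⁻¹ : GL (Fin r) ℂ) : Matrix (Fin r) (Fin r) ℂ) *
            Cq (confAct z.1 (z.2 : _)) = Cq (z.2 : _) := by
          rw [← hkeyq z.1 (z.2 : _), ← mul_assoc, ← mclm_mul, Units.inv_mul, mclm_one, one_mul]
        rw [← hident, Ring.mul_inverse_cancel_right _ _ hz]
      have hCqpt : Tendsto (fun z : GL (Fin r) ℂ × Config V U r =>
          Cq (z.2 : _)) ↑𝒰 (𝓝 (Cq pv)) := (hCq_cont.tendsto pv).comp hpvt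
      have hMt' : Tendsto (fun z : GL (Fin r) ℂ × Config V U r =>
          mclm r ((z.1⁻¹ : GL (Fin r) ℂ) : Matrix (Fin r) (Fin r) ℂ)) ↑𝒰 (𝓝 (Cq pv)) := by
        have := hCqpt.mul hinvq
        rw [mul_one] at this
        exact Tendsto.congr' hMn'.symm this
      -- pass to matrices
      set ψ : ((Fin r → ℂ) →L[ℂ] (Fin r → ℂ)) →ₗ[ℂ] Matrix (Fin r) (Fin r) ℂ :=
        (LinearMap.toMatrix' : ((Fin r → ℂ) →ₗ[ℂ] (Fin r → ℂ)) ≃ₗ[ℂ]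
          Matrix (Fin r) (Fin r) ℂ).toLinearMap ∘ₗ ContinuousLinearMap.coeLM ℂ with hψ_def
      have hψ_cont : Continuous ψ := ψ.continuous_of_finiteDimensional
      have hψ_mclm : ∀ A : Matrix (Fin r) (Fin r) ℂ, ψ (mclm r A) = A := by
        intro A
        show LinearMap.toMatrix' ((mclm r A : (Fin r → ℂ) →L[ℂ] (Fin r → ℂ)) :
          (Fin r → ℂ) →ₗ[ℂ] (Fin r → ℂ)) = A
        have : ((mclm r A : (Fin r → ℂ) →L[ℂ] (Fin r → ℂ)) :
            (Fin r → ℂ) →ₗ[ℂ] (Fin r → ℂ)) = Matrix.toLin' A := by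
          ext v
          simp [Matrix.toLin'_apply]
        rw [this, LinearMap.toMatrix'_toLin']
      set M₁ : Matrix (Fin r) (Fin r) ℂ := ψ (Cp qv) with hM₁_def
      set M₂ : Matrix (Fin r) (Fin r) ℂ := ψ (Cq pv) with hM₂_def
      have hMmat : Tendsto (fun z : GL (Fin r) ℂ × Config V U r =>
          (z.1 : Matrix (Fin r) (Fin r) ℂ)) ↑𝒰 (𝓝 M₁) := by
        have := (hψ_cont.tendsto _).comp hMt
        refine Tendsto.congr (fun z => hψ_mclm _) this
      have hMmat' : Tendsto (fun z : GL (Fin r) ℂ × Config V U r =>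
          ((z.1⁻¹ : GL (Fin r) ℂ) : Matrix (Fin r) (Fin r) ℂ)) ↑𝒰 (𝓝 M₂) := by
        have := (hψ_cont.tendsto _).comp hMt'
        refine Tendsto.congr (fun z => hψ_mclm _) this
      -- M₁ and M₂ are mutually inverse
      have h12 : M₁ * M₂ = 1 := by
        refine tendsto_nhds_unique (hMmat.mul hMmat') ?_
        have : (fun z : GL (Fin r) ℂ × Config V U r =>
            (z.1 : Matrix (Fin r) (Fin r) ℂ) *
            ((z.1⁻¹ : GL (Fin r) ℂ) : Matrix (Fin r) (Fin r) ℂ)) = fun _ => 1 :=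
          funext fun z => z.1.mul_inv
        rw [this]
        exact tendsto_const_nhds
      have h21 : M₂ * M₁ = 1 := by
        refine tendsto_nhds_unique (hMmat'.mul hMmat) ?_
        have : (fun z : GL (Fin r) ℂ × Config V U r =>
            ((z.1⁻¹ : GL (Fin r) ℂ) : Matrix (Fin r) (Fin r) ℂ) *
            (z.1 : Matrix (Fin r) (Fin r) ℂ)) = fun _ => 1 :=
          funext fun z => z.1.inv_mul
        rw [this]
        exact tendsto_const_nhds
      set g₀ : GL (Fin r) ℂ := ⟨M₁, M₂, h12, h21⟩ with hg₀_def
      have hgt : Tendsto (fun z : GL (Fin r) ℂ × Config V U r => z.1) ↑𝒰 (𝓝 g₀) := by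
        rw [Units.isEmbedding_embedProduct.tendsto_nhds_iff]
        exact Tendsto.prodMk_nhds hMmat ((MulOpposite.continuous_op.tendsto _).comp hMmat')
      refine ⟨(g₀, y.2), ?_, ?_⟩
      · -- f (g₀, y.2) = y
        have hc : Tendsto (fun z : GL (Fin r) ℂ × Config V U r =>
            confAct z.1 (z.2 : _)) ↑𝒰 (𝓝 (confAct g₀ pv)) :=
          (hconf_cont.tendsto (g₀, y.2)).comp (hgt.prodMk_nhds hp2)
        have heq : confAct g₀ pv = qv := tendsto_nhds_unique hc hact
        exact Prod.ext (Subtype.ext heq) rfl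
      · -- 𝒰 ≤ 𝓝 (g₀, y.2)
        have ht : Tendsto (fun z : GL (Fin r) ℂ × Config V U r => (z.1, z.2)) ↑𝒰
            (𝓝 (g₀, y.2)) := hgt.prodMk_nhds hp2
        exact tendsto_id'.mp ht
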